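/- For λ, μ > 0, h > 0, σ² > 0, α ∈ (0,1], if λ/(μα) − σ²/h ≤ 0, then p = 0 maximizes F(p) = −μ·p − (λ/α)·( t − log(1 + h·p/σ²) )₊ over p ≥ 0, for any t ∈ ℝ. -/

import Mathlib

open Real

theorem no_transmission_regime (h σ2 lam mu α : ℝ)
    (hh : 0 < h) (hσ : 0 < σ2) (hlam : 0 < lam) (hmu : 0 < mu)
    (hα : 0 < α) (hα1 : α ≤ 1)
    (hcond : lam / (mu * α) - σ2 / h ≤ 0) :
    ∀ t : ℝ, ∀ p, 0 ≤ p →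
      -mu * p - (lam / α) * max (t - Real.log (1 + h * p / σ2)) 0 ≤
      -mu * 0 - (lam / α) * max (t - Real.log (1 + h * 0 / σ2)) 0 := by
  intro t p hp
  set x := h * p / σ2 with hx
  have hx0 : 0 ≤ x := by positivity
  set L := Real.log (1 + x) with hL
  have hL0 : 0 ≤ L := Real.log_nonneg (by linarith)
  have hLx : L ≤ x := by
    have := Real.log_le_sub_one_of_pos (x := 1 + x) (by linarith)
    linarith
  have hmax : max t 0 - max (t - L) 0 ≤ L := by
    rcases le_total t 0 with h1 | h1 <;> rcases le_total (t - L) 0 with h2 | h2 <;>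
      simp only [max_eq_left, max_eq_right, h1, h2] <;> linarith
  have hcoef : lam / α * (h / σ2) ≤ mu := by
    rw [sub_nonpos, div_le_div_iff₀ (by positivity) hh] at hcond
    rw [div_mul_div_comm, div_le_iff₀ (by positivity)]
    nlinarith
  have key : lam / α * (max t 0 - max (t - L) 0) ≤ mu * p := by
    have h1 : lam / α * (max t 0 - max (t - L) 0) ≤ lam / α * x := by
      apply mul_le_mul_of_nonneg_left (le_trans hmax hLx) (by positivity)
    have h2 : lam / α * x ≤ mu * p := by
      have : lam / α * x = lam / α * (h / σ2) * p := by
        rw [hx]; ring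
      rw [this]
      exact mul_le_mul_of_nonneg_right hcoef hp
    linarith
  have hsimp : h * 0 / σ2 = 0 := by ring
  rw [hsimp]
  simp only [add_zero, Real.log_one, sub_zero, mul_zero, neg_zero, zero_sub]
  nlinarith [key]
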